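/- Let M = (E, ρ) be a matroid and let Y ⊆ E. Then the collection of cyclic flats of the restriction M|Y satisfies Z(M|Y) = { cyc(Z ∩ Y) : Z ∈ Z(M) }. -/

import Mathlib

open Finset

structure FinMatroid (α : Type*) [DecidableEq α] where
  E : Finset α
  rk : Finset α → ℕ
  rk_le_card : ∀ A, A ⊆ E → rk A ≤ A.card
  rk_mono : ∀ A B, A ⊆ B → B ⊆ E → rk A ≤ rk B
  rk_submod : ∀ A B, A ⊆ E → B ⊆ E → rk (A ∪ B) + rk (A ∩ B) ≤ rk A + rk B

namespace FinMatroid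

variable {α : Type*} [DecidableEq α]

/-- The closure operator `cl(A) = {e ∈ E : ρ(A ∪ {e}) = ρ(A)}`. -/
def cl (M : FinMatroid α) (A : Finset α) : Finset α :=
  M.E.filter fun e => M.rk (insert e A) = M.rk A

/-- The cyclic operator `cyc(A) = {e ∈ A : ρ(A − {e}) = ρ(A)}`. -/
def cyc (M : FinMatroid α) (A : Finset α) : Finset α :=
  A.filter fun e => M.rk (A.erase e) = M.rk A

/-- A flat is a set fixed by the closure operator. -/
def IsFlat (M : FinMatroid α) (F : Finset α) : Prop :=
  F ⊆ M.E ∧ M.cl F = F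

/-- A cyclic set is a set fixed by the cyclic operator. -/
def IsCyclic (M : FinMatroid α) (U : Finset α) : Prop :=
  U ⊆ M.E ∧ M.cyc U = U

/-- A cyclic flat is a set fixed by both the closure and the cyclic operators. -/
def IsCyclicFlat (M : FinMatroid α) (Z : Finset α) : Prop :=
  Z ⊆ M.E ∧ M.cl Z = Z ∧ M.cyc Z = Z

/-- The minor `M|Y/X`: restriction to `Y` followed by contraction of `X`. -/
def minor (M : FinMatroid α) (X Y : Finset α) (hXY : X ⊆ Y) (hY : Y ⊆ M.E) :
    FinMatroid α where
  E := Y \ X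
  rk A := M.rk (A ∪ X) - M.rk X
  rk_le_card := by
    intro A hA
    have hAE : A ⊆ M.E := fun a ha => hY (mem_sdiff.mp (hA ha)).1
    have hXE : X ⊆ M.E := hXY.trans hY
    have h1 := M.rk_submod A X hAE hXE
    have h2 := M.rk_le_card A hAE
    show M.rk (A ∪ X) - M.rk X ≤ A.card
    omega
  rk_mono := by
    intro A B hAB hB
    have hBE : B ⊆ M.E := fun a ha => hY (mem_sdiff.mp (hB ha)).1
    have hBX : B ∪ X ⊆ M.E := union_subset hBE (hXY.trans hY)
    have := M.rk_mono (A ∪ X) (B ∪ X) (union_subset_union hAB Subset.rfl) hBX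
    show M.rk (A ∪ X) - M.rk X ≤ M.rk (B ∪ X) - M.rk X
    omega
  rk_submod := by
    intro A B hA hB
    have hAE : A ⊆ M.E := fun a ha => hY (mem_sdiff.mp (hA ha)).1
    have hBE : B ⊆ M.E := fun a ha => hY (mem_sdiff.mp (hB ha)).1
    have hXE : X ⊆ M.E := hXY.trans hY
    have hAX : A ∪ X ⊆ M.E := union_subset hAE hXE
    have hBX : B ∪ X ⊆ M.E := union_subset hBE hXE
    have hsub := M.rk_submod (A ∪ X) (B ∪ X) hAX hBX
    have e1 : (A ∪ X) ∪ (B ∪ X) = (A ∪ B) ∪ X := by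
      ext x; simp only [mem_union]; tauto
    have e2 : (A ∪ X) ∩ (B ∪ X) = (A ∩ B) ∪ X := by
      ext x; simp only [mem_union, mem_inter]; tauto
    rw [e1, e2] at hsub
    have h1 : M.rk X ≤ M.rk (A ∪ X) := M.rk_mono X _ subset_union_right hAX
    have h2 : M.rk X ≤ M.rk (B ∪ X) := M.rk_mono X _ subset_union_right hBX
    have hIX : (A ∩ B) ∪ X ⊆ M.E := union_subset (inter_subset_left.trans hAE) hXE
    have hUX : (A ∪ B) ∪ X ⊆ M.E := union_subset (union_subset hAE hBE) hXE
    have h3 : M.rk X ≤ M.rk ((A ∩ B) ∪ X) := M.rk_mono X _ subset_union_right hIX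
    have h4 : M.rk X ≤ M.rk ((A ∪ B) ∪ X) := M.rk_mono X _ subset_union_right hUX
    show M.rk ((A ∪ B) ∪ X) - M.rk X + (M.rk ((A ∩ B) ∪ X) - M.rk X) ≤
      (M.rk (A ∪ X) - M.rk X) + (M.rk (B ∪ X) - M.rk X)
    omega

/-- The restriction `M|Y`. -/
def restrict (M : FinMatroid α) (Y : Finset α) (hY : Y ⊆ M.E) : FinMatroid α where
  E := Y
  rk := M.rk
  rk_le_card := fun A hA => M.rk_le_card A (hA.trans hY)
  rk_mono := fun A B hAB hB => M.rk_mono A B hAB (hB.trans hY)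
  rk_submod := fun A B hA hB => M.rk_submod A B (hA.trans hY) (hB.trans hY)

/-- `M` is binary: it is the matroid of linear dependence of a family of
vectors over the field with two elements. -/
def IsBinary (M : FinMatroid α) : Prop :=
  ∃ (m : ℕ) (φ : α → (Fin m → ZMod 2)),
    ∀ A : Finset α, A ⊆ M.E →
      M.rk A = Module.finrank (ZMod 2) (Submodule.span (ZMod 2) (φ '' (A : Set α)))

def Simple (M : FinMatroid α) : Prop :=
  (∀ e ∈ M.E, M.rk {e} = 1) ∧
    ∀ e ∈ M.E, ∀ f ∈ M.E, e ≠ f → M.rk ({e, f} : Finset α) = 2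

def NoIsthmus (M : FinMatroid α) : Prop :=
  ∀ e ∈ M.E, M.rk (M.E.erase e) = M.rk M.E

def IsMinDist (M : FinMatroid α) (d : ℕ) : Prop :=
  (∃ X ⊆ M.E, M.rk (M.E \ X) < M.rk M.E ∧ X.card = d) ∧
    ∀ X ⊆ M.E, M.rk (M.E \ X) < M.rk M.E → d ≤ X.card

def IsAtomCF (M : FinMatroid α) (Z : Finset α) : Prop :=
  M.IsCyclicFlat Z ∧ Z ≠ ∅ ∧ ¬ ∃ Z', M.IsCyclicFlat Z' ∧ ∅ ⊂ Z' ∧ Z' ⊂ Z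

def IsCoatomCF (M : FinMatroid α) (Z : Finset α) : Prop :=
  M.IsCyclicFlat Z ∧ Z ⊂ M.E ∧ ¬ ∃ Z', M.IsCyclicFlat Z' ∧ Z ⊂ Z' ∧ Z' ⊂ M.E

def IsCircuit (M : FinMatroid α) (C : Finset α) : Prop :=
  C ⊆ M.E ∧ M.rk C < C.card ∧ ∀ D ⊂ C, M.rk D = D.card

end FinMatroid


namespace FinMatroid

variable {α : Type*} [DecidableEq α] (M : FinMatroid α)

lemma mem_cl' {A : Finset α} {e : α} :
    e ∈ M.cl A ↔ e ∈ M.E ∧ M.rk (insert e A) = M.rk A := Finset.mem_filter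

lemma mem_cyc' {A : Finset α} {e : α} :
    e ∈ M.cyc A ↔ e ∈ A ∧ M.rk (A.erase e) = M.rk A := Finset.mem_filter

lemma cl_subset_E (A : Finset α) : M.cl A ⊆ M.E := Finset.filter_subset _ _

lemma cyc_subset (A : Finset α) : M.cyc A ⊆ A := Finset.filter_subset _ _

lemma subset_cl {A : Finset α} (hA : A ⊆ M.E) : A ⊆ M.cl A := by
  intro e he
  rw [mem_cl', Finset.insert_eq_self.mpr he]
  exact ⟨hA he, rfl⟩

lemma rk_insert_le {A : Finset α} {e : α} (hA : A ⊆ M.E) (he : e ∈ M.E) :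
    M.rk (insert e A) ≤ M.rk A + 1 := by
  have h := M.rk_submod A {e} hA (by simpa using he)
  have h1 : M.rk {e} ≤ 1 := by simpa using M.rk_le_card {e} (by simpa using he)
  rw [Finset.union_comm, ← Finset.insert_eq] at h
  omega

lemma rk_le_erase_add_one {A : Finset α} (hA : A ⊆ M.E) (e : α) :
    M.rk A ≤ M.rk (A.erase e) + 1 := by
  by_cases he : e ∈ A
  · have h := M.rk_insert_le (A := A.erase e) ((Finset.erase_subset _ _).trans hA) (hA he)
    rwa [Finset.insert_erase he] at h
  · rw [Finset.erase_eq_of_notMem he]; omega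

lemma rk_erase_le {A : Finset α} (hA : A ⊆ M.E) (e : α) :
    M.rk (A.erase e) ≤ M.rk A :=
  M.rk_mono _ _ (Finset.erase_subset _ _) hA

lemma cl_mono {A B : Finset α} (hAB : A ⊆ B) (hB : B ⊆ M.E) : M.cl A ⊆ M.cl B := by
  intro e he
  rw [mem_cl'] at he ⊢
  obtain ⟨heE, hr⟩ := he
  refine ⟨heE, ?_⟩
  have hA : A ⊆ M.E := hAB.trans hB
  have hsub := M.rk_submod (insert e A) B (Finset.insert_subset heE hA) hB
  have hu : insert e A ∪ B = insert e B := by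
    ext x
    simp only [Finset.mem_union, Finset.mem_insert]
    constructor
    · rintro ((h | h) | h)
      · exact Or.inl h
      · exact Or.inr (hAB h)
      · exact Or.inr h
    · rintro (h | h)
      · exact Or.inl (Or.inl h)
      · exact Or.inr h
  have hi : A ⊆ insert e A ∩ B := fun x hx =>
    Finset.mem_inter.mpr ⟨Finset.mem_insert_of_mem hx, hAB hx⟩
  rw [hu] at hsub
  have h1 : M.rk A ≤ M.rk (insert e A ∩ B) :=
    M.rk_mono _ _ hi (Finset.inter_subset_right.trans hB)
  have h2 : M.rk B ≤ M.rk (insert e B) :=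
    M.rk_mono _ _ (Finset.subset_insert _ _) (Finset.insert_subset heE hB)
  omega

lemma rk_union_of_subset_cl {A : Finset α} (hA : A ⊆ M.E) :
    ∀ B : Finset α, B ⊆ M.cl A → M.rk (A ∪ B) = M.rk A := by
  intro B
  induction B using Finset.induction_on with
  | empty => intro _; rw [Finset.union_empty]
  | @insert a B ha ih =>
    intro hB
    have haA : a ∈ M.cl A := hB (Finset.mem_insert_self _ _)
    have hBcl : B ⊆ M.cl A := (Finset.subset_insert _ _).trans hB
    have hAB : M.rk (A ∪ B) = M.rk A := ih hBcl
    obtain ⟨haE, hra⟩ := (mem_cl' M).mp haA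
    have hBE : B ⊆ M.E := hBcl.trans (M.cl_subset_E A)
    have hsub := M.rk_submod (insert a A) (A ∪ B)
      (Finset.insert_subset haE hA) (Finset.union_subset hA hBE)
    have hu : insert a A ∪ (A ∪ B) = A ∪ insert a B := by
      ext x
      simp only [Finset.mem_union, Finset.mem_insert]
      tauto
    have hi : A ⊆ insert a A ∩ (A ∪ B) := fun x hx =>
      Finset.mem_inter.mpr ⟨Finset.mem_insert_of_mem hx, Finset.mem_union_left _ hx⟩
    rw [hu] at hsub
    have h1 : M.rk A ≤ M.rk (insert a A ∩ (A ∪ B)) :=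
      M.rk_mono _ _ hi (Finset.inter_subset_right.trans (Finset.union_subset hA hBE))
    have h2 : M.rk A ≤ M.rk (A ∪ insert a B) :=
      M.rk_mono _ _ Finset.subset_union_left
        (Finset.union_subset hA (Finset.insert_subset haE hBE))
    omega

lemma rk_cl {A : Finset α} (hA : A ⊆ M.E) : M.rk (M.cl A) = M.rk A := by
  have h := M.rk_union_of_subset_cl hA (M.cl A) Finset.Subset.rfl
  rwa [Finset.union_eq_right.mpr (M.subset_cl hA)] at h

lemma cl_idem {A : Finset α} (hA : A ⊆ M.E) : M.cl (M.cl A) = M.cl A := by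
  apply Finset.Subset.antisymm
  · intro e he
    rw [mem_cl'] at he ⊢
    obtain ⟨heE, hr⟩ := he
    refine ⟨heE, ?_⟩
    rw [M.rk_cl hA] at hr
    have h1 : M.rk (insert e A) ≤ M.rk (insert e (M.cl A)) :=
      M.rk_mono _ _ (Finset.insert_subset_insert _ (M.subset_cl hA))
        (Finset.insert_subset heE (M.cl_subset_E A))
    have h2 : M.rk A ≤ M.rk (insert e A) :=
      M.rk_mono _ _ (Finset.subset_insert _ _) (Finset.insert_subset heE hA)
    omega
  · exact M.subset_cl (M.cl_subset_E A)

lemma cyc_idem : ∀ {A : Finset α}, A ⊆ M.E → M.cyc (M.cyc A) = M.cyc A := by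
  intro A
  induction A using Finset.strongInduction with
  | _ A ih =>
    intro hA
    by_cases hfix : M.cyc A = A
    · rw [hfix]; exact hfix
    · have hss : M.cyc A ⊂ A := Finset.ssubset_iff_subset_ne.mpr ⟨M.cyc_subset A, hfix⟩
      obtain ⟨f, hfA, hfnc⟩ := Finset.exists_of_ssubset hss
      have hfr : M.rk (A.erase f) ≠ M.rk A := fun h => hfnc ((mem_cyc' M).mpr ⟨hfA, h⟩)
      have hfle := M.rk_erase_le hA f
      have hfge := M.rk_le_erase_add_one hA f
      have hcoloop : M.rk (A.erase f) + 1 = M.rk A := by omega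
      have hA'E : A.erase f ⊆ M.E := (Finset.erase_subset _ _).trans hA
      have key : M.cyc (A.erase f) = M.cyc A := by
        ext e
        rw [mem_cyc', mem_cyc']
        by_cases hef : e = f
        · subst hef
          simp only [Finset.notMem_erase, false_and, false_iff, not_and]
          exact fun _ => hfr
        · by_cases heA : e ∈ A
          · have heA' : e ∈ A.erase f := Finset.mem_erase.mpr ⟨hef, heA⟩
            simp only [heA, heA', true_and]
            have hsub := M.rk_submod (A.erase e) (A.erase f)
              ((Finset.erase_subset _ _).trans hA) ((Finset.erase_subset _ _).trans hA)
            have hu : A.erase e ∪ A.erase f = A := by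
              ext x
              simp only [Finset.mem_union, Finset.mem_erase]
              constructor
              · rintro (⟨_, h⟩ | ⟨_, h⟩) <;> exact h
              · intro hx
                by_cases hxe : x = e
                · exact Or.inr ⟨by rw [hxe]; exact hef, hx⟩
                · exact Or.inl ⟨hxe, hx⟩
            have hi : A.erase e ∩ A.erase f = (A.erase f).erase e := by
              ext x
              simp only [Finset.mem_inter, Finset.mem_erase]
              tauto
            rw [hu, hi] at hsub
            have h1 : M.rk ((A.erase f).erase e) ≤ M.rk (A.erase e) := by
              rw [← hi]
              exact M.rk_mono _ _ Finset.inter_subset_left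
                ((Finset.erase_subset _ _).trans hA)
            have h2 : M.rk (A.erase e) ≤ M.rk ((A.erase e).erase f) + 1 :=
              M.rk_le_erase_add_one ((Finset.erase_subset _ _).trans hA) f
            have h3 : (A.erase e).erase f = (A.erase f).erase e :=
              Finset.erase_right_comm
            rw [h3] at h2
            have h4 := M.rk_erase_le hA'E e
            have h5 := M.rk_erase_le hA e
            omega
          · have heA' : e ∉ A.erase f := fun h => heA (Finset.mem_erase.mp h).2
            simp [heA, heA']
      have hssA : A.erase f ⊂ A := Finset.erase_ssubset hfA
      rw [← key, ih (A.erase f) hssA hA'E, key]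

lemma cyc_cl_of_cyclic {W : Finset α} (hW : W ⊆ M.E) (hc : M.cyc W = W) :
    M.cyc (M.cl W) = M.cl W := by
  apply Finset.Subset.antisymm (M.cyc_subset _)
  intro e he
  rw [mem_cyc']
  refine ⟨he, ?_⟩
  have hclE : M.cl W ⊆ M.E := M.cl_subset_E W
  have hrk : M.rk (M.cl W) = M.rk W := M.rk_cl hW
  have hle : M.rk ((M.cl W).erase e) ≤ M.rk (M.cl W) := M.rk_erase_le hclE e
  have hge : M.rk W ≤ M.rk ((M.cl W).erase e) := by
    by_cases heW : e ∈ W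
    · have heW' : e ∈ M.cyc W := hc.symm ▸ heW
      obtain ⟨-, hre⟩ := (mem_cyc' M).mp heW'
      have : W.erase e ⊆ (M.cl W).erase e :=
        Finset.erase_subset_erase _ (M.subset_cl hW)
      calc M.rk W = M.rk (W.erase e) := hre.symm
        _ ≤ M.rk ((M.cl W).erase e) :=
          M.rk_mono _ _ this ((Finset.erase_subset _ _).trans hclE)
    · have : W ⊆ (M.cl W).erase e :=
        Finset.subset_erase.mpr ⟨M.subset_cl hW, heW⟩
      exact M.rk_mono _ _ this ((Finset.erase_subset _ _).trans hclE)
  omega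

lemma restrict_cl {Y : Finset α} (hY : Y ⊆ M.E) (A : Finset α) :
    (M.restrict Y hY).cl A = M.cl A ∩ Y := by
  ext e
  simp only [cl, Finset.mem_filter, Finset.mem_inter]
  constructor
  · rintro ⟨heY, h⟩; exact ⟨⟨hY heY, h⟩, heY⟩
  · rintro ⟨⟨_, h⟩, heY⟩; exact ⟨heY, h⟩

lemma restrict_cyc {Y : Finset α} (hY : Y ⊆ M.E) (A : Finset α) :
    (M.restrict Y hY).cyc A = M.cyc A := rfl

end FinMatroid

/-- `Z(M|Y) = { cyc(Z ∩ Y) : Z ∈ Z(M) }`. -/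
theorem cyclicFlats_restrict {α : Type*} [DecidableEq α] (M : FinMatroid α)
    (Y : Finset α) (hY : Y ⊆ M.E) :
    {Z : Finset α | (M.restrict Y hY).IsCyclicFlat Z} =
      {W : Finset α | ∃ Z, M.IsCyclicFlat Z ∧ W = M.cyc (Z ∩ Y)} := by

  ext W
  simp only [Set.mem_setOf_eq]
  constructor
  · rintro ⟨hWY, hclW, hcycW⟩
    have hWY' : W ⊆ Y := hWY
    have hWE : W ⊆ M.E := hWY'.trans hY
    have hcyc' : M.cyc W = W := by rw [← M.restrict_cyc hY]; exact hcycW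
    have hclW' : M.cl W ∩ Y = W := by rw [← M.restrict_cl hY]; exact hclW
    refine ⟨M.cl W, ⟨M.cl_subset_E W, M.cl_idem hWE, M.cyc_cl_of_cyclic hWE hcyc'⟩, ?_⟩
    rw [hclW', hcyc']
  · rintro ⟨Z, ⟨hZE, hZcl, hZcyc⟩, rfl⟩
    have hZYE : Z ∩ Y ⊆ M.E := Finset.inter_subset_right.trans hY
    set W := M.cyc (Z ∩ Y) with hWdef
    have hWZY : W ⊆ Z ∩ Y := M.cyc_subset _
    have hWY' : W ⊆ Y := hWZY.trans Finset.inter_subset_right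
    have hWE : W ⊆ M.E := hWY'.trans hY
    refine ⟨hWY', ?_, ?_⟩
    · -- closure in restriction: M.cl W ∩ Y = W
      rw [M.restrict_cl hY]
      apply Finset.Subset.antisymm
      · intro e he
        obtain ⟨hecl, heY⟩ := Finset.mem_inter.mp he
        obtain ⟨heE, _⟩ := (FinMatroid.mem_cl' M).mp hecl
        have heZ : e ∈ Z := by
          have h1 : M.cl W ⊆ M.cl (Z ∩ Y) := M.cl_mono hWZY hZYE
          have h2 : M.cl (Z ∩ Y) ⊆ M.cl Z := M.cl_mono Finset.inter_subset_left hZE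
          rw [hZcl] at h2
          exact h2 (h1 hecl)
        by_cases heW : e ∈ W
        · exact heW
        · have hsub : W ⊆ (Z ∩ Y).erase e := Finset.subset_erase.mpr ⟨hWZY, heW⟩
          have hEe : (Z ∩ Y).erase e ⊆ M.E := (Finset.erase_subset _ _).trans hZYE
          have hecl2 : e ∈ M.cl ((Z ∩ Y).erase e) := M.cl_mono hsub hEe hecl
          obtain ⟨-, hre⟩ := (FinMatroid.mem_cl' M).mp hecl2
          rw [Finset.insert_erase (Finset.mem_inter.mpr ⟨heZ, heY⟩)] at hre
          exact (FinMatroid.mem_cyc' M).mpr ⟨Finset.mem_inter.mpr ⟨heZ, heY⟩, hre.symm⟩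
      · exact Finset.subset_inter (M.subset_cl hWE) hWY'
    · rw [M.restrict_cyc hY, hWdef]
      exact M.cyc_idem hZYE
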